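/- Let q be even and b ∈ F_{q^2}^* with Tr_{F_q/F_2}(b^{-1-q}) = 0. Then f(x) = b^{1-q} x + b x^q + x^{2q-1} is a permutation polynomial of F_{q^2}. -/

import Mathlib

/-- For `q = 2ⁿ` and `b ∈ F_{q²}*` with `Tr_{F_q/F_2}(b^(-1-q)) = 0`
(the absolute trace `∑_{i<n} x^(2^i)` of `b^(-(q+1)) ∈ F_q`),
`f(x) = b^(1-q) x + b x^q + x^(2q-1)` is a permutation polynomial of `F_{q²}`. -/
theorem stmt_9 (n q : ℕ) (hn : 0 < n) (hq : q = 2 ^ n)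
    (F : Type*) [Field F] [Fintype F] (hcard : Fintype.card F = q ^ 2)
    (b : F) (hb : b ≠ 0)
    (htr : ∑ i ∈ Finset.range n, ((b ^ (q + 1))⁻¹) ^ (2 ^ i) = 0) :
    Function.Bijective
      (fun x : F => b * (b ^ q)⁻¹ * x + b * x ^ q + x ^ (2 * q - 1)) := by
  classical
  have hq2 : 2 ≤ q := by
    rw [hq]
    exact Nat.one_lt_two_pow_iff.mpr (by omega)
  -- characteristic 2
  haveI hcF : CharP F (ringChar F) := ringChar.charP F
  have hpr : (ringChar F).Prime := CharP.char_is_prime F (ringChar F)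
  obtain ⟨m, _, hm⟩ := FiniteField.card F (ringChar F)
  have hr2 : ringChar F = 2 := by
    have hdvd : ringChar F ∣ 2 := by
      have h1 : ringChar F ∣ ringChar F ^ (m : ℕ) := dvd_pow_self _ (by positivity)
      rw [hm] at hcard
      rw [hcard, hq, ← pow_mul] at h1
      exact hpr.dvd_of_dvd_pow h1
    exact (Nat.prime_dvd_prime_iff_eq hpr Nat.prime_two).mp hdvd
  haveI hchar2 : CharP F 2 := by rw [← hr2]; exact ringChar.charP F
  haveI : Fact (Nat.Prime 2) := ⟨Nat.prime_two⟩
  have htwo : (2 : F) = 0 := by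
    have h := CharP.cast_eq_zero F 2
    exact_mod_cast h
  -- Frobenius additivity for exponent q
  have hfrob : ∀ u v : F, (u + v) ^ q = u ^ q + v ^ q := by
    intro u v
    rw [hq]
    exact add_pow_char_pow u v 2 n
  -- x^(q*q) = x
  have hFF : ∀ y : F, y ^ (q * q) = y := by
    intro y
    rw [show q * q = q ^ 2 by ring, ← hcard]
    exact FiniteField.pow_card y
  set f : F → F := fun x : F => b * (b ^ q)⁻¹ * x + b * x ^ q + x ^ (2 * q - 1)
    with hfdef
  have hf0 : f 0 = 0 := by
    simp only [hfdef]
    rw [zero_pow (show q ≠ 0 by omega), zero_pow (show 2 * q - 1 ≠ 0 by omega)]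
    ring
  -- key identity : b * x^q * (f x)^q = b^q * (x * f x)
  have hK : ∀ x : F, b * x ^ q * (f x) ^ q = b ^ q * (x * f x) := by
    intro x
    have hfq : (f x) ^ q = b ^ q * b⁻¹ * x ^ q + b ^ q * x + x ^ ((2 * q - 1) * q) := by
      simp only [hfdef, hfrob, mul_pow, inv_pow, ← pow_mul, hFF]
      try ring
    have he3 : q + (2 * q - 1) * q = q * q * 2 := by
      obtain ⟨k, rfl⟩ : ∃ k, q = k + 2 := ⟨q - 2, by omega⟩
      have h1 : 2 * (k + 2) - 1 = 2 * k + 3 := by omega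
      rw [h1]; ring
    have e3 : x ^ q * x ^ ((2 * q - 1) * q) = x ^ 2 := by
      rw [← pow_add, he3, pow_mul, hFF]
    have e4 : x * x ^ (2 * q - 1) = x ^ q * x ^ q := by
      rw [← pow_succ', ← pow_add]
      congr 1
      omega
    calc b * x ^ q * (f x) ^ q
        = b ^ q * (b * b⁻¹) * (x ^ q * x ^ q) + b * b ^ q * (x ^ q * x)
            + b * (x ^ q * x ^ ((2 * q - 1) * q)) := by rw [hfq]; ring
      _ = b ^ q * (x ^ q * x ^ q) + b * b ^ q * (x ^ q * x) + b * x ^ 2 := by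
            rw [mul_inv_cancel₀ hb, e3, mul_one]
      _ = b * (b ^ q * (b ^ q)⁻¹) * (x * x) + b * b ^ q * (x * x ^ q)
            + b ^ q * (x * x ^ (2 * q - 1)) := by
            rw [mul_inv_cancel₀ (pow_ne_zero q hb), e4]; ring
      _ = b ^ q * (x * f x) := by simp only [hfdef]; ring
  -- nonvanishing : f x ≠ 0 for x ≠ 0
  have hN : ∀ x : F, x ≠ 0 → f x ≠ 0 := by
    intro x hx hfx
    set t : F := x ^ (q - 1) with htdef
    have e2 : x ^ q = t * x := by
      rw [htdef, ← pow_succ]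
      congr 1
      omega
    have e1 : x ^ (2 * q - 1) = t ^ 2 * x := by
      rw [htdef, ← pow_mul, ← pow_succ]
      congr 1
      omega
    have h3 : (t ^ 2 + b * t + b * (b ^ q)⁻¹) * x ^ 2 = f x * x := by
      simp only [hfdef]
      rw [e2, e1]
      ring
    have ht : t ^ 2 + b * t + b * (b ^ q)⁻¹ = 0 := by
      rw [hfx, zero_mul] at h3
      rcases mul_eq_zero.mp h3 with h | h
      · exact h
      · exact absurd h (pow_ne_zero 2 hx)
    have hqq : (q - 1) * (q + 1) + 1 = q * q := by
      obtain ⟨k, rfl⟩ : ∃ k, q = k + 2 := ⟨q - 2, by omega⟩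
      have h1 : k + 2 - 1 = k + 1 := by omega
      rw [h1]; ring
    have htq : t ^ (q + 1) = 1 := by
      have h4 : t ^ (q + 1) * x = 1 * x := by
        rw [one_mul, htdef, ← pow_mul, ← pow_succ, hqq, hFF]
      exact mul_right_cancel₀ hx h4
    set c : F := (b ^ (q + 1))⁻¹ with hcdef
    have hbq1 : b ^ (q + 1) ≠ 0 := pow_ne_zero _ hb
    have hcne : c ≠ 0 := inv_ne_zero hbq1
    set s : F := t * b⁻¹ with hsdef
    have hts : t = s * b := by
      rw [hsdef]
      field_simp
    have hs : s ^ 2 + s = c := by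
      have h5 : (s ^ 2 + s) * b ^ 2 = c * b ^ 2 := by
        have h6 : c * b ^ 2 = b * (b ^ q)⁻¹ := by
          rw [hcdef, pow_succ, mul_inv]
          field_simp
        rw [h6]
        calc (s ^ 2 + s) * b ^ 2 = (s * b) ^ 2 + (s * b) * b := by ring
          _ = t ^ 2 + t * b := by rw [← hts]
          _ = b * (b ^ q)⁻¹ := by linear_combination ht - b * (b ^ q)⁻¹ * htwo
      exact mul_right_cancel₀ (pow_ne_zero 2 hb) h5
    -- telescoping trace sum
    have htele : ∀ M : ℕ, ∑ i ∈ Finset.range M, c ^ (2 ^ i) = s ^ (2 ^ M) + s := by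
      intro M
      induction M with
      | zero =>
          simp only [Finset.range_zero, Finset.sum_empty, pow_zero, pow_one]
          linear_combination (-s) * htwo
      | succ k ih =>
          rw [Finset.sum_range_succ, ih]
          have hck : c ^ (2 ^ k) = (s ^ (2 ^ k)) ^ 2 + s ^ (2 ^ k) := by
            rw [← hs]
            have : (s ^ 2 + s) ^ (2 ^ k) = (s ^ 2) ^ (2 ^ k) + s ^ (2 ^ k) :=
              add_pow_char_pow (s ^ 2) s 2 k
            rw [this, ← pow_mul, ← pow_mul, Nat.mul_comm]
          rw [hck]
          have h7 : s ^ (2 ^ (k + 1)) = (s ^ (2 ^ k)) ^ 2 := by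
            rw [← pow_mul, pow_succ]
          rw [h7]
          linear_combination s ^ (2 ^ k) * htwo
    have hsq : s ^ q = s := by
      have h8 := htele n
      rw [htr] at h8
      rw [hq]
      linear_combination -h8 - s * htwo
    -- norm condition
    have hnorm : s ^ 2 * b ^ (q + 1) = 1 := by
      have h9 : t ^ (q + 1) = s ^ 2 * b ^ (q + 1) := by
        rw [hts, mul_pow, pow_succ s q, hsq]; ring
      rw [← h9, htq]
    have hs2 : s ^ 2 = s + c := by linear_combination hs - s * htwo
    have hcb : c * b ^ (q + 1) = 1 := inv_mul_cancel₀ hbq1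
    have hs0 : s = 0 := by
      have h10 : s * b ^ (q + 1) = 0 := by
        linear_combination hnorm - hcb - b ^ (q + 1) * hs2
      rcases mul_eq_zero.mp h10 with h | h
      · exact h
      · exact absurd h hbq1
    apply hcne
    rw [← hs, hs0]
    ring
  -- injectivity
  have hinj : Function.Injective f := by
    intro x y hxy
    by_cases hvx : f x = 0
    · have hx0 : x = 0 := by
        by_contra h
        exact hN x h hvx
      have hy0 : y = 0 := by
        by_contra h
        exact hN y h (hxy ▸ hvx)
      rw [hx0, hy0]
    · have hfy : f y ≠ 0 := by rw [← hxy]; exact hvx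
      have hx0 : x ≠ 0 := by rintro rfl; exact hvx hf0
      have hy0 : y ≠ 0 := by rintro rfl; exact hfy hf0
      have hKx := hK x
      have hKy := hK y
      rw [← hxy] at hKy
      have hbfq : b * (f x) ^ q ≠ 0 := mul_ne_zero hb (pow_ne_zero _ hvx)
      set lam : F := b ^ q * f x * (b * (f x) ^ q)⁻¹ with hlam
      have hlx : x ^ q = lam * x := by
        rw [hlam]
        field_simp
        linear_combination hKx
      have hly : y ^ q = lam * y := by
        rw [hlam]
        field_simp
        linear_combination hKy
      have hpow2 : ∀ z : F, z ≠ 0 → z ^ q = lam * z → z ^ (2 * q - 1) = lam ^ 2 * z := by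
        intro z hz hzq
        have h8 : z ^ (2 * q - 1) * z = lam ^ 2 * z * z := by
          have h9 : z ^ (2 * q - 1) * z = (z ^ q) ^ 2 := by
            rw [← pow_succ, ← pow_mul]
            congr 1
            omega
          rw [h9, hzq]
          ring
        exact mul_right_cancel₀ hz h8
      have hlx2 := hpow2 x hx0 hlx
      have hly2 := hpow2 y hy0 hly
      set C : F := b * (b ^ q)⁻¹ + b * lam + lam ^ 2 with hC
      have hCx : f x = C * x := by
        simp only [hfdef]
        rw [hlx, hlx2, hC]
        ring
      have hCy : f y = C * y := by
        simp only [hfdef]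
        rw [hly, hly2, hC]
        ring
      have hC0 : C ≠ 0 := by
        intro h
        exact hvx (by rw [hCx, h, zero_mul])
      apply mul_left_cancel₀ hC0
      rw [← hCx, ← hCy, hxy]
  exact Finite.injective_iff_bijective.mp hinj
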